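/- Let β > 0, p > 1 with Hölder conjugate p̂, and 0 < y < 1. For the geometric probability sequence λ(n) = (1-y²)·y^{2n} one has the exact evaluation E_p(λ) = (p·p̂/(4·(1-y²)))·e^{β/2}·(y^{2/p} - e^{-β/p})·(y^{2/p̂} - e^{-β/p̂}). -/

import Mathlib

open Real

/-- The classical Dirichlet form of the quantum Ornstein–Uhlenbeck semigroup with
parameter `β`, evaluated on a state diagonal in the Fock basis. -/
noncomputable def dirichletFormP (β p phat : ℝ) (lam : ℕ → ℝ) : ℝ :=
  p * phat / 4 *
    (Real.exp (-β/2) * (∑' n : ℕ, ((n : ℝ) + 1) * lam n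
        - Real.exp (β/p) * ∑' n : ℕ, ((n : ℝ) + 1) * lam n ^ (1/phat) * lam (n+1) ^ (1/p))
      + Real.exp (β/2) * (∑' n : ℕ, (n : ℝ) * lam n
        - Real.exp (-β/p) * ∑' n : ℕ, ((n : ℝ) + 1) * lam (n+1) ^ (1/phat) * lam n ^ (1/p)))

/-- `∑ (n+1) x^n = 1/(1-x)^2` for `‖x‖ < 1`. -/
lemma tsum_np1_geometric {x : ℝ} (hx : ‖x‖ < 1) :
    ∑' n : ℕ, ((n : ℝ) + 1) * x ^ n = 1 / (1 - x) ^ 2 := by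
  have h1 : HasSum (fun n : ℕ => (n : ℝ) * x ^ n) (x / (1 - x) ^ 2) :=
    hasSum_coe_mul_geometric_of_norm_lt_one hx
  have h2 : HasSum (fun n : ℕ => x ^ n) (1 - x)⁻¹ := hasSum_geometric_of_norm_lt_one hx
  have h3 : HasSum (fun n : ℕ => ((n : ℝ) + 1) * x ^ n) (x / (1 - x) ^ 2 + (1 - x)⁻¹) := by
    convert h1.add h2 using 1; funext n; ring
  rw [h3.tsum_eq]
  have hx1 : (1 : ℝ) - x ≠ 0 := by
    have : x < 1 := lt_of_abs_lt (by simpa [Real.norm_eq_abs] using hx)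
    intro h; nlinarith
  field_simp
  ring

/-- Key rpow identity for the cross terms. -/
lemma key_rpow {x a b : ℝ} (hx0 : 0 < x) (hx1 : x < 1) (hc : 1/a + 1/b = 1) (n : ℕ) :
    ((1 - x) * x ^ n) ^ (1/b) * ((1 - x) * x ^ (n + 1)) ^ (1/a)
      = (1 - x) * (x ^ (1/a) * x ^ n) := by
  have h1x : (0 : ℝ) < 1 - x := by linarith
  rw [Real.mul_rpow h1x.le (pow_nonneg hx0.le n),
    Real.mul_rpow h1x.le (pow_nonneg hx0.le (n + 1)),
    ← Real.rpow_natCast x n, ← Real.rpow_natCast x (n + 1),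
    ← Real.rpow_mul hx0.le, ← Real.rpow_mul hx0.le]
  have e1 : (1 - x) ^ (1/b) * (1 - x) ^ (1/a) = 1 - x := by
    rw [← Real.rpow_add h1x]
    rw [show 1/b + 1/a = 1 by linarith, Real.rpow_one]
  have e2 : x ^ ((n : ℝ) * (1/b)) * x ^ (((n + 1 : ℕ) : ℝ) * (1/a))
      = x ^ (1/a) * x ^ ((n : ℝ)) := by
    rw [← Real.rpow_add hx0, ← Real.rpow_add hx0]
    congr 1
    push_cast
    linear_combination (n : ℝ) * hc
  calc (1 - x) ^ (1/b) * x ^ ((n : ℝ) * (1/b)) * ((1 - x) ^ (1/a) * x ^ (((n+1 : ℕ) : ℝ) * (1/a)))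
      = ((1 - x) ^ (1/b) * (1 - x) ^ (1/a)) * (x ^ ((n : ℝ) * (1/b)) * x ^ (((n+1 : ℕ) : ℝ) * (1/a))) := by
        ring
    _ = (1 - x) * (x ^ (1/a) * x ^ ((n : ℝ))) := by rw [e1, e2]

/-- Exact evaluation of the Dirichlet form `E_p` on the geometric probability sequence
`λ(n) = (1-y²)·y^{2n}`. -/
theorem dirichletFormP_geometric (β p phat : ℝ) (hβ : 0 < β)
    (hp : 1 < p) (hconj : 1/p + 1/phat = 1)
    (y : ℝ) (hy0 : 0 < y) (hy1 : y < 1) :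
    dirichletFormP β p phat (fun n => (1 - y^2) * (y^2) ^ n)
      = p * phat / (4 * (1 - y^2)) * Real.exp (β/2)
          * (y ^ (2/p) - Real.exp (-β/p)) * (y ^ (2/phat) - Real.exp (-β/phat)) := by
  have hx0 : (0 : ℝ) < y ^ 2 := by positivity
  have hx1 : y ^ 2 < 1 := by nlinarith
  have h1x : (0 : ℝ) < 1 - y ^ 2 := by linarith
  have hnorm : ‖y ^ 2‖ < 1 := by
    rw [Real.norm_eq_abs, abs_of_pos hx0]; exact hx1
  have hnp1 : ∑' n : ℕ, ((n : ℝ) + 1) * (y ^ 2) ^ n = 1 / (1 - y ^ 2) ^ 2 :=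
    tsum_np1_geometric hnorm
  have hconj' : 1/phat + 1/p = 1 := by linarith
  -- the four sums
  have e1 : ∑' n : ℕ, ((n : ℝ) + 1) * ((1 - y^2) * (y^2) ^ n) = 1 / (1 - y^2) := by
    calc ∑' n : ℕ, ((n : ℝ) + 1) * ((1 - y^2) * (y^2) ^ n)
        = ∑' n : ℕ, (1 - y^2) * (((n : ℝ) + 1) * (y^2) ^ n) := by
          congr 1; funext n; ring
      _ = (1 - y^2) * ∑' n : ℕ, ((n : ℝ) + 1) * (y^2) ^ n := tsum_mul_left
      _ = 1 / (1 - y^2) := by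
          rw [hnp1]; field_simp
  have e3 : ∑' n : ℕ, (n : ℝ) * ((1 - y^2) * (y^2) ^ n) = y^2 / (1 - y^2) := by
    calc ∑' n : ℕ, (n : ℝ) * ((1 - y^2) * (y^2) ^ n)
        = ∑' n : ℕ, (1 - y^2) * ((n : ℝ) * (y^2) ^ n) := by
          congr 1; funext n; ring
      _ = (1 - y^2) * ∑' n : ℕ, (n : ℝ) * (y^2) ^ n := tsum_mul_left
      _ = y^2 / (1 - y^2) := by
          rw [tsum_coe_mul_geometric_of_norm_lt_one hnorm]
          field_simp
  have e2 : ∑' n : ℕ, ((n : ℝ) + 1) * ((1 - y^2) * (y^2) ^ n) ^ (1/phat)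
        * ((1 - y^2) * (y^2) ^ (n+1)) ^ (1/p) = (y^2) ^ (1/p) / (1 - y^2) := by
    calc ∑' n : ℕ, ((n : ℝ) + 1) * ((1 - y^2) * (y^2) ^ n) ^ (1/phat)
          * ((1 - y^2) * (y^2) ^ (n+1)) ^ (1/p)
        = ∑' n : ℕ, ((1 - y^2) * (y^2) ^ (1/p)) * (((n : ℝ) + 1) * (y^2) ^ n) := by
          congr 1; funext n
          rw [mul_assoc, key_rpow hx0 hx1 hconj n]; ring
      _ = ((1 - y^2) * (y^2) ^ (1/p)) * ∑' n : ℕ, ((n : ℝ) + 1) * (y^2) ^ n := tsum_mul_left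
      _ = (y^2) ^ (1/p) / (1 - y^2) := by
          rw [hnp1]; field_simp
  have e4 : ∑' n : ℕ, ((n : ℝ) + 1) * ((1 - y^2) * (y^2) ^ (n+1)) ^ (1/phat)
        * ((1 - y^2) * (y^2) ^ n) ^ (1/p) = (y^2) ^ (1/phat) / (1 - y^2) := by
    calc ∑' n : ℕ, ((n : ℝ) + 1) * ((1 - y^2) * (y^2) ^ (n+1)) ^ (1/phat)
          * ((1 - y^2) * (y^2) ^ n) ^ (1/p)
        = ∑' n : ℕ, ((1 - y^2) * (y^2) ^ (1/phat)) * (((n : ℝ) + 1) * (y^2) ^ n) := by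
          congr 1; funext n
          rw [mul_assoc, mul_comm (((1 - y^2) * (y^2) ^ (n+1)) ^ (1/phat)),
            key_rpow hx0 hx1 hconj' n]; ring
      _ = ((1 - y^2) * (y^2) ^ (1/phat)) * ∑' n : ℕ, ((n : ℝ) + 1) * (y^2) ^ n := tsum_mul_left
      _ = (y^2) ^ (1/phat) / (1 - y^2) := by
          rw [hnp1]; field_simp
  have hA : y ^ (2/p) = (y^2) ^ (1/p) := by
    rw [← Real.rpow_natCast y 2, ← Real.rpow_mul hy0.le]
    congr 1; push_cast; ring
  have hB : y ^ (2/phat) = (y^2) ^ (1/phat) := by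
    rw [← Real.rpow_natCast y 2, ← Real.rpow_mul hy0.le]
    congr 1; push_cast; ring
  have hAB : (y^2) ^ (1/p) * (y^2) ^ (1/phat) = y^2 := by
    rw [← Real.rpow_add hx0, hconj, Real.rpow_one]
  have hEE : Real.exp (-β/p) * Real.exp (-β/phat) = Real.exp (-β) := by
    rw [← Real.exp_add]; congr 1; linear_combination (-β) * hconj
  have hE3 : Real.exp (β/2) * Real.exp (-β) = Real.exp (-β/2) := by
    rw [← Real.exp_add]; congr 1; ring
  have hE4 : Real.exp (-β/2) * Real.exp (β/p) = Real.exp (β/2) * Real.exp (-β/phat) := by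
    rw [← Real.exp_add, ← Real.exp_add]; congr 1; linear_combination β * hconj
  simp only [dirichletFormP]
  rw [e1, e2, e3, e4, hA, hB, div_mul_eq_div_div]
  linear_combination (-(p * phat / 4 * (1 - y^2)⁻¹) * Real.exp (β/2)) * hAB
    + (-(p * phat / 4 * (1 - y^2)⁻¹) * (y^2) ^ (1/p)) * hE4
    + (-(p * phat / 4 * (1 - y^2)⁻¹) * Real.exp (β/2)) * hEE
    + (-(p * phat / 4 * (1 - y^2)⁻¹)) * hE3
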